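/- Let ε, G, F be nonnegative real numbers and U, L, ν positive real numbers, and set Re := U·L/ν. If (1/2)·G² ≤ ε + F·U and F ≤ U²/L + (√ν/L)·√ε, then ε ≥ (1/3)·G² − (1/3)·(2 + 1/Re)·(U³/L). -/

import Mathlib

/-- Algebraic core of the lower bound in Theorem 4.2. -/
theorem mean_dissipation_lower_bound
    (ε G F U L ν Re : ℝ)
    (hε : 0 ≤ ε) (hG : 0 ≤ G) (hF : 0 ≤ F)
    (hU : 0 < U) (hL : 0 < L) (hν : 0 < ν)
    (hRe : Re = U * L / ν)
    (h1 : (1/2) * G^2 ≤ ε + F * U)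
    (h2 : F ≤ U^2 / L + (Real.sqrt ν / L) * Real.sqrt ε) :
    ε ≥ (1/3) * G^2 - (1/3) * (2 + 1/Re) * (U^3 / L) := by
  have hν2 : Real.sqrt ν ^ 2 = ν := Real.sq_sqrt hν.le
  have hε2 : Real.sqrt ε ^ 2 = ε := Real.sq_sqrt hε
  have hamgm : (Real.sqrt ν / L * Real.sqrt ε) * U ≤ (ε + ν * U^2 / L^2) / 2 := by
    have h := sq_nonneg (Real.sqrt ν * U / L - Real.sqrt ε)
    have hL2 : (0:ℝ) < L ^ 2 := by positivity
    rw [div_mul_eq_mul_div, div_mul_eq_mul_div, ← sub_nonneg]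
    have expand : (ε + ν * U ^ 2 / L ^ 2) / 2 - Real.sqrt ν * Real.sqrt ε * U / L
        = (Real.sqrt ν * U / L - Real.sqrt ε)^2 / 2 := by
      field_simp
      linear_combination (-(U^2)) * hν2 + (-(L^2)) * hε2
    rw [expand]
    positivity
  have hFU : F * U ≤ U^3 / L + (ε + ν * U^2 / L^2) / 2 := by
    have := mul_le_mul_of_nonneg_right h2 hU.le
    have hcube : U^2 / L * U = U^3 / L := by ring
    nlinarith
  have hRe' : 1 / Re = ν / (U * L) := by
    rw [hRe]; field_simp
  rw [ge_iff_le, hRe', sub_le_iff_le_add]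
  have key : (1/2) * G^2 ≤ ε + U^3 / L + (ε + ν * U^2 / L^2) / 2 := by linarith
  have hUL : 0 < U * L := by positivity
  field_simp at key ⊢
  nlinarith [key, mul_pos hU hL, sq_nonneg U, sq_nonneg L, hε, hν.le]
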